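/- Let a : ℝ → ℝ be C¹ with a' nondecreasing, and suppose the Lebesgue–Stieltjes measure a'' is doubling on an interval I with doubling constant D. Define Δ(u₁,u₂) := ∫_{[u₁,u₂]} (u₂ − s)(s − u₁) da''(s) (for u₁ ≤ u₂) and Δ̂(u₁,u₂) := |u₁ − u₂|² · a''([min(u₁,u₂) − |u₁−u₂|, max(u₁,u₂) + |u₁−u₂|]). Then there exists C > 0 depending only on D with Δ(u₁,u₂) ≥ C·Δ̂(u₁,u₂) for all u₁, u₂ ∈ I. -/

import Mathlib

open MeasureTheory

/-- If `a''` is doubling on an interval `I` with constant `D`, then `Δ ≥ C·Δ̂` on `I × I`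
for some `C > 0` depending only on `D`. -/
theorem stmt15 (D : ℝ) (hD : 0 < D) :
    ∃ C > 0, ∀ (a : ℝ → ℝ), ContDiff ℝ 1 a → Monotone (deriv a) →
      ∀ (A : StieltjesFunction ℝ), (∀ x, A x = deriv a x) →
      ∀ I : Set ℝ, Convex ℝ I →
      (∀ c ∈ I, ∀ ρ : ℝ, 0 < ρ →
        A.measure (Set.Icc (c - 2 * ρ) (c + 2 * ρ))
          ≤ ENNReal.ofReal D * A.measure (Set.Icc (c - ρ) (c + ρ))) →
      ∀ u₁ u₂ : ℝ, u₁ ∈ I → u₂ ∈ I →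
        C * (|u₁ - u₂| ^ 2 *
              (A.measure (Set.Icc (min u₁ u₂ - |u₁ - u₂|) (max u₁ u₂ + |u₁ - u₂|))).toReal)
          ≤ ∫ s in Set.Icc (min u₁ u₂) (max u₁ u₂),
              (max u₁ u₂ - s) * (s - min u₁ u₂) ∂A.measure := by
  refine ⟨1 / (16 * D ^ 3), by positivity, ?_⟩
  intro a ha hmono A hA I hI hdoub u₁ u₂ hu₁ hu₂
  set μ := A.measure with hμ
  set v₁ := min u₁ u₂ with hv₁
  set v₂ := max u₁ u₂ with hv₂
  set h := |u₁ - u₂| with hh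
  have hv12 : v₁ ≤ v₂ := min_le_max
  have hvv : v₂ - v₁ = h := by
    rw [hh, hv₁, hv₂, max_sub_min_eq_abs, abs_sub_comm]
  have hfnn : ∀ s ∈ Set.Icc v₁ v₂, 0 ≤ (v₂ - s) * (s - v₁) := by
    intro s hs
    exact mul_nonneg (by linarith [hs.2]) (by linarith [hs.1])
  rcases eq_or_lt_of_le (abs_nonneg (u₁ - u₂)) with h0 | hpos
  · -- degenerate case h = 0
    rw [← hh] at h0
    have : (1 : ℝ) / (16 * D ^ 3) * (h ^ 2 * (μ (Set.Icc (v₁ - h) (v₂ + h))).toReal) = 0 := by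
      rw [← h0]; ring
    rw [this]
    exact setIntegral_nonneg measurableSet_Icc hfnn
  rw [← hh] at hpos
  -- midpoint
  set c := (u₁ + u₂) / 2 with hc
  have hcI : c ∈ I := by
    have h2 := hI hu₁ hu₂ (by norm_num : (0:ℝ) ≤ 1/2) (by norm_num : (0:ℝ) ≤ 1/2) (by norm_num)
    have h3 : (1/2:ℝ) • u₁ + (1/2:ℝ) • u₂ = c := by rw [smul_eq_mul, smul_eq_mul, hc]; ring
    rwa [h3] at h2
  have hcv₁ : c - h / 2 = v₁ := by
    rcases le_total u₁ u₂ with hle | hle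
    · rw [hv₁, min_eq_left hle, hh, abs_of_nonpos (by linarith), hc]; ring
    · rw [hv₁, min_eq_right hle, hh, abs_of_nonneg (by linarith), hc]; ring
  have hcv₂ : c + h / 2 = v₂ := by
    rcases le_total u₁ u₂ with hle | hle
    · rw [hv₂, max_eq_right hle, hh, abs_of_nonpos (by linarith), hc]; ring
    · rw [hv₂, max_eq_left hle, hh, abs_of_nonneg (by linarith), hc]; ring
  -- doubling chain
  have d1 := hdoub c hcI (h / 4) (by linarith)
  have d2 := hdoub c hcI (h / 2) (by linarith)
  have d3 := hdoub c hcI h hpos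
  rw [show 2 * (h / 4) = h / 2 by ring] at d1
  rw [show 2 * (h / 2) = h by ring] at d2
  set M := Set.Icc (c - h / 4) (c + h / 4) with hM
  have key : μ (Set.Icc (c - 2 * h) (c + 2 * h)) ≤ ENNReal.ofReal D ^ 3 * μ M := by
    calc μ (Set.Icc (c - 2 * h) (c + 2 * h))
        ≤ ENNReal.ofReal D * μ (Set.Icc (c - h) (c + h)) := d3
      _ ≤ ENNReal.ofReal D * (ENNReal.ofReal D * μ (Set.Icc (c - h / 2) (c + h / 2))) :=
          mul_le_mul_right d2 _
      _ ≤ ENNReal.ofReal D * (ENNReal.ofReal D * (ENNReal.ofReal D * μ M)) :=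
          mul_le_mul_right (mul_le_mul_right d1 _) _
      _ = ENNReal.ofReal D ^ 3 * μ M := by ring
  have hMfin : μ M ≠ ⊤ := (isCompact_Icc.measure_lt_top).ne
  have hbig_sub : Set.Icc (v₁ - h) (v₂ + h) ⊆ Set.Icc (c - 2 * h) (c + 2 * h) :=
    Set.Icc_subset_Icc (by linarith [hcv₁]) (by linarith [hcv₂])
  have key2 : (μ (Set.Icc (v₁ - h) (v₂ + h))).toReal ≤ D ^ 3 * (μ M).toReal := by
    have h1 : μ (Set.Icc (v₁ - h) (v₂ + h)) ≤ ENNReal.ofReal D ^ 3 * μ M :=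
      le_trans (measure_mono hbig_sub) key
    have h2 : ENNReal.ofReal D ^ 3 * μ M ≠ ⊤ := by
      exact ENNReal.mul_ne_top (by simp [ENNReal.pow_ne_top, ENNReal.ofReal_ne_top]) hMfin
    have := ENNReal.toReal_mono h2 h1
    rwa [ENNReal.toReal_mul, ENNReal.toReal_pow, ENNReal.toReal_ofReal hD.le] at this
  -- integral lower bound
  have hMsub : M ⊆ Set.Icc v₁ v₂ :=
    Set.Icc_subset_Icc (by linarith [hcv₁]) (by linarith [hcv₂])
  have hcont : Continuous fun s : ℝ => (v₂ - s) * (s - v₁) := by continuity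
  have hfint : IntegrableOn (fun s : ℝ => (v₂ - s) * (s - v₁)) (Set.Icc v₁ v₂) μ :=
    hcont.continuousOn.integrableOn_compact isCompact_Icc
  have hintM : (μ M).toReal * (h / 4 * (h / 4))
      ≤ ∫ s in M, (v₂ - s) * (s - v₁) ∂μ := by
    have hconst : IntegrableOn (fun _ : ℝ => h / 4 * (h / 4)) M μ := by
      exact integrableOn_const hMfin
    have hle : ∀ s ∈ M, h / 4 * (h / 4) ≤ (v₂ - s) * (s - v₁) := by
      intro s hs
      have h1 : h / 4 ≤ v₂ - s := by
        have := hs.2; linarith [hcv₂]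
      have h2 : h / 4 ≤ s - v₁ := by
        have := hs.1; linarith [hcv₁]
      exact mul_le_mul h1 h2 (by linarith) (by linarith [hs.1, hcv₁, h1])
    calc (μ M).toReal * (h / 4 * (h / 4))
        = ∫ _ in M, h / 4 * (h / 4) ∂μ := by rw [setIntegral_const]; simp [smul_eq_mul, Measure.real]
      _ ≤ ∫ s in M, (v₂ - s) * (s - v₁) ∂μ :=
          setIntegral_mono_on hconst (hfint.mono_set hMsub) measurableSet_Icc hle
  have hmono_int : ∫ s in M, (v₂ - s) * (s - v₁) ∂μ
      ≤ ∫ s in Set.Icc v₁ v₂, (v₂ - s) * (s - v₁) ∂μ := by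
    apply setIntegral_mono_set hfint
    · filter_upwards [ae_restrict_mem measurableSet_Icc] with s hs using hfnn s hs
    · exact HasSubset.Subset.eventuallyLE hMsub
  have hD3 : (0:ℝ) < D ^ 3 := by positivity
  have hMnn : 0 ≤ (μ M).toReal := ENNReal.toReal_nonneg
  calc 1 / (16 * D ^ 3) * (h ^ 2 * (μ (Set.Icc (v₁ - h) (v₂ + h))).toReal)
      ≤ 1 / (16 * D ^ 3) * (h ^ 2 * (D ^ 3 * (μ M).toReal)) := by
        apply mul_le_mul_of_nonneg_left _ (by positivity)
        exact mul_le_mul_of_nonneg_left key2 (by positivity)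
    _ = (μ M).toReal * (h / 4 * (h / 4)) := by field_simp; ring
    _ ≤ ∫ s in M, (v₂ - s) * (s - v₁) ∂μ := hintM
    _ ≤ ∫ s in Set.Icc v₁ v₂, (v₂ - s) * (s - v₁) ∂μ := hmono_int
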